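/- Let K be a complete discrete valued field of mixed characteristic (0, p) with perfect residue field k, and let S(K) be its set of Teichmüller representatives. Then: for all a, b ∈ S(K) there is a unique c ∈ S(K) with [c]₁ ∈ [a]₁ + [b]₁ in H₁(K); with this as addition and the coset multiplication, H₁(S(K)) = {[a]₁ : a ∈ S(K)} is a field; and the map [a]₁ ↦ a + m is a field isomorphism from H₁(S(K)) onto the residue field k. -/

import Mathlib

open Multiplicative WithZero Filter

noncomputable section

/-- The multiplicative value group `ℚₘ₀` used for normalized valuations:
`expQ q` corresponds to the additive value `q`. -/
abbrev QM0 : Type := WithZero (Multiplicative ℚ)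

/-- `expQ q` is the element of `ℚₘ₀` corresponding to the additive value `q`
(so that `v x = expQ q` means `ν(x) = q` additively). -/
def expQ (q : ℚ) : QM0 := ((Multiplicative.ofAdd (-q) : Multiplicative ℚ) : QM0)

section Hyper

variable {K : Type*} [Field K] {Γ₀ : Type*} [LinearOrderedCommGroupWithZero Γ₀]

/-- `hrel v γ a b` says that `b` belongs to the coset `a·(1+𝔪^γ)`,
where `𝔪^γ = {x : ν(x) > γ}` (multiplicatively: `v x < γ`). -/
def hrel (v : Valuation K Γ₀) (γ : Γ₀) (a b : K) : Prop :=
  ∃ u : K, v (u - 1) < γ ∧ b = a * u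

/-- The coset `a·(1+𝔪^γ)` as a subset of `K`. -/
def coset (v : Valuation K Γ₀) (γ : Γ₀) (a : K) : Set K := {b | hrel v γ a b}

/-- `hsumMem v γ a b c` says `[c] ∈ [a] + [b]` in the valued hyperfield `H_γ(K)`. -/
def hsumMem (v : Valuation K Γ₀) (γ : Γ₀) (a b c : K) : Prop :=
  ∃ x y : K, hrel v γ a x ∧ hrel v γ b y ∧ hrel v γ (x + y) c

/-- The valued hyperfield `H_γ(K) = K/(1+𝔪^γ)`. -/
def Hyp (v : Valuation K Γ₀) (γ : Γ₀) : Type _ := Quot (hrel v γ)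

/-- The class `[a]_γ ∈ H_γ(K)`. -/
def hmk (v : Valuation K Γ₀) (γ : Γ₀) (a : K) : Hyp v γ := Quot.mk _ a

end Hyper

section HypHom

variable {K₁ K₂ : Type*} [Field K₁] [Field K₂]
variable {Γ₁ Γ₂ : Type*} [LinearOrderedCommGroupWithZero Γ₁] [LinearOrderedCommGroupWithZero Γ₂]

/-- A homomorphism of valued hyperfields `H_γ(K₁) → H_δ(K₂)`:
`f([0]) = [0]`, `f([1]) = [1]`, `f` is multiplicative, `f(α + β) ⊆ f(α) + f(β)`
and `ν(α) ≤ ν(β) ↔ ν(f α) ≤ ν(f β)` (stated here multiplicatively). -/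
structure HypHom (v₁ : Valuation K₁ Γ₁) (γ : Γ₁) (v₂ : Valuation K₂ Γ₂) (δ : Γ₂) where
  toFun : Hyp v₁ γ → Hyp v₂ δ
  map_zero' : toFun (hmk v₁ γ 0) = hmk v₂ δ 0
  map_one' : toFun (hmk v₁ γ 1) = hmk v₂ δ 1
  map_mul' : ∀ (a b : K₁) (a' b' : K₂), toFun (hmk v₁ γ a) = hmk v₂ δ a' →
    toFun (hmk v₁ γ b) = hmk v₂ δ b' → toFun (hmk v₁ γ (a * b)) = hmk v₂ δ (a' * b')
  map_hsum' : ∀ (a b c : K₁) (a' b' c' : K₂), toFun (hmk v₁ γ a) = hmk v₂ δ a' →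
    toFun (hmk v₁ γ b) = hmk v₂ δ b' → toFun (hmk v₁ γ c) = hmk v₂ δ c' →
    hsumMem v₁ γ a b c → hsumMem v₂ δ a' b' c'
  val_le_iff' : ∀ (a b : K₁) (a' b' : K₂), toFun (hmk v₁ γ a) = hmk v₂ δ a' →
    toFun (hmk v₁ γ b) = hmk v₂ δ b' → (v₁ a ≤ v₁ b ↔ v₂ a' ≤ v₂ b')

/-- A homomorphism of valued hyperfields is *over `p`* if `f([p]) = [p]`. -/
def HypHom.OverP {v₁ : Valuation K₁ Γ₁} {γ : Γ₁} {v₂ : Valuation K₂ Γ₂} {δ : Γ₂}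
    (p : ℕ) (f : HypHom v₁ γ v₂ δ) : Prop :=
  f.toFun (hmk v₁ γ (p : K₁)) = hmk v₂ δ (p : K₂)

end HypHom

section CDVF

variable (K : Type*) [Field K] [Valued K QM0]

/-- `K` is a complete discrete valued field of mixed characteristic `(0,p)` with
perfect residue field and ramification index `e`, with the valuation normalized so
that `ν(p) = 1` and `ν(K^×) = (1/e)ℤ`.  Perfectness of the residue field is expressed
as surjectivity of the Frobenius on residues. -/
structure IsCompleteDVF (p e : ℕ) : Prop where
  prime : p.Prime
  charZero : CharZero K
  complete : CompleteSpace K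
  epos : 0 < e
  v_p : Valued.v (p : K) = expQ 1
  discrete : ∀ x : K, x ≠ 0 → ∃ k : ℤ, Valued.v x = expQ ((k : ℚ) / e)
  exists_unif : ∃ π : K, Valued.v π = expQ (1 / e)
  perfectResidue : ∀ x : K, Valued.v x ≤ 1 → ∃ y : K, Valued.v y ≤ 1 ∧ Valued.v (x - y ^ p) < 1

/-- The cut-off value for the `n`-th valued hyperfield `H_n(K) = K/(1+𝔪^n)`:
`𝔪^n = {x : ν(x) > (n-1)/e}` when the ramification index is `e` and `ν(p) = 1`. -/
def hnγ (e n : ℕ) : QM0 := expQ (((n : ℚ) - 1) / e)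

/-- The set of Teichmüller representatives: elements of the valuation ring which are
`p^s`-th powers in the valuation ring for every `s`. -/
def Teich (p : ℕ) : Set K :=
  {a | Valued.v a ≤ 1 ∧ ∀ s : ℕ, ∃ b : K, Valued.v b ≤ 1 ∧ b ^ p ^ s = a}

/-- The Witt subring of `K`: the set of (convergent) sums `Σ s_k p^k` with all
`s_k` Teichmüller representatives. -/
def WittPart (p : ℕ) : Set K :=
  {x | ∃ s : ℕ → K, (∀ k, s k ∈ Teich K p) ∧
    Tendsto (fun n => ∑ k ∈ Finset.range n, s k * (p : K) ^ k) atTop (nhds x)}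

end CDVF
section ExpQ

lemma expQ_ne_zero (q : ℚ) : expQ q ≠ 0 := WithZero.coe_ne_zero

lemma expQ_le_expQ {a b : ℚ} : expQ a ≤ expQ b ↔ b ≤ a := by
  rw [expQ, expQ, WithZero.coe_le_coe, Multiplicative.ofAdd_le]
  exact neg_le_neg_iff

lemma expQ_lt_expQ {a b : ℚ} : expQ a < expQ b ↔ b < a := by
  rw [expQ, expQ, WithZero.coe_lt_coe, Multiplicative.ofAdd_lt]
  exact neg_lt_neg_iff

lemma expQ_zero : expQ 0 = 1 := by simp [expQ]

lemma expQ_mul (a b : ℚ) : expQ a * expQ b = expQ (a + b) := by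
  rw [expQ, expQ, expQ, ← WithZero.coe_mul, ← ofAdd_add, neg_add]

lemma expQ_pow (a : ℚ) (n : ℕ) : (expQ a) ^ n = expQ (n * a) := by
  induction n with
  | zero => simp [expQ_zero]
  | succ n ih => rw [pow_succ, ih, expQ_mul, Nat.cast_succ]; ring_nf

lemma expQ_inj {a b : ℚ} : expQ a = expQ b ↔ a = b :=
  ⟨fun h => le_antisymm (expQ_le_expQ.mp h.ge) (expQ_le_expQ.mp h.le), fun h => h ▸ rfl⟩

end ExpQ
section ValGen

variable {K : Type*} [Field K] {Γ₀ : Type*} [LinearOrderedCommGroupWithZero Γ₀]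
variable (v : Valuation K Γ₀)

lemma val_natCast_le_one (n : ℕ) : v (n : K) ≤ 1 := by
  induction n with
  | zero => simp
  | succ n ih =>
      push_cast
      exact le_trans (v.map_add _ _) (max_le ih (le_of_eq v.map_one))

lemma val_pow_sub_pow {x y : K} (hx : v x ≤ 1) (hy : v y ≤ 1) (n : ℕ) :
    v (x ^ n - y ^ n) ≤ v (x - y) := by
  induction n with
  | zero => simp
  | succ n ih =>
      have key : x ^ (n+1) - y ^ (n+1) = x * (x ^ n - y ^ n) + (x - y) * y ^ n := by ring
      rw [key]
      refine le_trans (v.map_add _ _) (max_le ?_ ?_)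
      · rw [v.map_mul]
        exact le_trans (mul_le_mul' hx ih) (by simp)
      · rw [v.map_mul]
        calc v (x - y) * v (y ^ n) ≤ v (x - y) * 1 :=
              mul_le_mul' le_rfl (by rw [v.map_pow]; exact pow_le_one' hy n)
        _ = v (x - y) := mul_one _

lemma val_geom_sum_le {x y : K} (hx : v x ≤ 1) (hy : v y ≤ 1) (n : ℕ) :
    v (∑ i ∈ Finset.range n, x ^ i * y ^ (n - 1 - i)) ≤ max (v (x - y)) (v (n : K)) := by
  have h1 : ∀ i ∈ Finset.range n, y ^ i * y ^ (n - 1 - i) = y ^ (n - 1) := by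
    intro i hi
    rw [← pow_add]
    congr 1
    have := Finset.mem_range.mp hi
    omega
  have hsplit : (∑ i ∈ Finset.range n, x ^ i * y ^ (n - 1 - i)) =
      (∑ i ∈ Finset.range n, (x ^ i - y ^ i) * y ^ (n - 1 - i)) + (n : K) * y ^ (n - 1) := by
    have h2 : ∑ i ∈ Finset.range n, (x ^ i - y ^ i) * y ^ (n - 1 - i) =
        (∑ i ∈ Finset.range n, x ^ i * y ^ (n - 1 - i)) -
          ∑ i ∈ Finset.range n, y ^ i * y ^ (n - 1 - i) := by
      rw [← Finset.sum_sub_distrib]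
      exact Finset.sum_congr rfl fun i _ => by ring
    rw [h2, Finset.sum_congr rfl h1, Finset.sum_const, Finset.card_range, nsmul_eq_mul]
    ring
  rw [hsplit]
  refine le_trans (v.map_add _ _) (max_le ?_ ?_)
  · refine le_trans (v.map_sum_le fun i _ => ?_) (le_max_left _ _)
    rw [v.map_mul]
    calc v (x ^ i - y ^ i) * v (y ^ (n-1-i)) ≤ v (x - y) * 1 :=
          mul_le_mul' (val_pow_sub_pow v hx hy i) (by rw [v.map_pow]; exact pow_le_one' hy _)
    _ = v (x - y) := mul_one _
  · rw [v.map_mul]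
    refine le_trans ?_ (le_max_right _ _)
    calc v (n : K) * v (y ^ (n-1)) ≤ v (n : K) * 1 :=
          mul_le_mul' le_rfl (by rw [v.map_pow]; exact pow_le_one' hy _)
    _ = v (n : K) := mul_one _

lemma val_pow_sub_pow_strong {x y : K} (hx : v x ≤ 1) (hy : v y ≤ 1) (n : ℕ) :
    v (x ^ n - y ^ n) ≤ v (x - y) * max (v (x - y)) (v (n : K)) := by
  rw [← geom_sum₂_mul x y n, v.map_mul, mul_comm]
  exact mul_le_mul' le_rfl (val_geom_sum_le v hx hy n)

end ValGen
section Frob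

variable {K : Type*} [Field K] {Γ₀ : Type*} [LinearOrderedCommGroupWithZero Γ₀]
variable (v : Valuation K Γ₀)

lemma val_sub_le_one {x y : K} (hx : v x ≤ 1) (hy : v y ≤ 1) : v (x - y) ≤ 1 :=
  le_trans (v.map_sub _ _) (max_le hx hy)

lemma frob_inj_val {p : ℕ} (hp : p.Prime) {x y : K} (hx : v x ≤ 1) (hy : v y ≤ 1)
    (hxy : v (x ^ p - y ^ p) < 1) (hpv : v (p : K) < 1) : v (x - y) < 1 := by
  have hd : v (x - y) ≤ 1 := val_sub_le_one v hx hy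
  rcases lt_or_eq_of_le hd with h | h
  · exact h
  exfalso
  have key := add_pow_prime_eq hp (x - y) y
  rw [sub_add_cancel] at key
  have hq : (x - y) ^ p = (x ^ p - y ^ p) -
      (p : K) * ∑ k ∈ Finset.Ioo 0 p, (x - y) ^ k * y ^ (p - k) * ↑(p.choose k / p) := by
    have hsum : ∑ k ∈ Finset.Ioo 0 p, (x - y) ^ k * y ^ (p - k) * ↑(p.choose k / p) =
        (x - y) * y * ∑ k ∈ Finset.Ioo 0 p, (x - y) ^ (k - 1) * y ^ (p - k - 1) * ↑(p.choose k / p) := by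
      rw [Finset.mul_sum]
      refine Finset.sum_congr rfl fun k hk => ?_
      obtain ⟨h1, h2⟩ := Finset.mem_Ioo.mp hk
      obtain ⟨a, rfl⟩ : ∃ a, k = a + 1 := ⟨k - 1, by omega⟩
      obtain ⟨b, hb⟩ : ∃ b, p - (a + 1) = b + 1 := ⟨p - (a + 1) - 1, by omega⟩
      rw [hb]
      simp only [Nat.add_sub_cancel]
      ring
    rw [hsum, key]; ring
  have hS : v (∑ k ∈ Finset.Ioo 0 p, (x - y) ^ k * y ^ (p - k) * ↑(p.choose k / p)) ≤ 1 := by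
    refine v.map_sum_le fun k _ => ?_
    rw [v.map_mul, v.map_mul, v.map_pow, v.map_pow]
    exact mul_le_one' (mul_le_one' (pow_le_one' hd _) (pow_le_one' hy _))
      (val_natCast_le_one v _)
  have hlt : v ((x - y) ^ p) < 1 := by
    rw [hq]
    refine lt_of_le_of_lt (v.map_sub _ _) (max_lt hxy ?_)
    rw [v.map_mul]
    exact lt_of_le_of_lt (mul_le_of_le_one_right' hS) hpv
  rw [v.map_pow, h, one_pow] at hlt
  exact lt_irrefl _ hlt

end Frob
section Main

variable {K : Type*} [Field K] [Valued K QM0] {p e : ℕ}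

local notation "vK" => (Valued.v : Valuation K QM0)

variable (h : IsCompleteDVF K p e)
include h

lemma T_le_one : expQ (1 / (e : ℚ)) ≤ 1 := by
  rw [← expQ_zero, expQ_le_expQ]
  positivity

lemma T_lt_one : expQ (1 / (e : ℚ)) < 1 := by
  rw [← expQ_zero, expQ_lt_expQ]
  have : (0:ℚ) < e := by exact_mod_cast h.epos
  positivity

lemma val_p_lt_one : vK (p : K) < 1 := by
  rw [h.v_p, ← expQ_zero, expQ_lt_expQ]; norm_num

lemma val_p_le_T : vK (p : K) ≤ expQ (1 / (e : ℚ)) := by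
  rw [h.v_p, expQ_le_expQ]
  rw [div_le_one (by exact_mod_cast h.epos)]
  exact_mod_cast h.epos

lemma lt_one_le_T {z : K} (hz : vK z < 1) : vK z ≤ expQ (1 / (e : ℚ)) := by
  rcases eq_or_ne z 0 with rfl | h0
  · simp
  obtain ⟨k, hk⟩ := h.discrete z h0
  rw [hk] at hz ⊢
  rw [← expQ_zero, expQ_lt_expQ] at hz
  rw [expQ_le_expQ]
  have he : (0:ℚ) < e := by exact_mod_cast h.epos
  have hkpos : 0 < k := by
    by_contra hc
    push_neg at hc
    have : (k:ℚ) ≤ 0 := by exact_mod_cast hc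
    have : (k:ℚ) / e ≤ 0 := div_nonpos_of_nonpos_of_nonneg this he.le
    linarith
  have h1k : (1:ℚ) ≤ k := by exact_mod_cast hkpos
  gcongr

lemma iter_bound (hp : p.Prime) {x y : K} (hx : vK x ≤ 1) (hy : vK y ≤ 1)
    (hxy : vK (x - y) < 1) (k : ℕ) :
    vK (x ^ p ^ k - y ^ p ^ k) ≤ expQ (1 / (e : ℚ)) ^ (k + 1) := by
  induction k with
  | zero => simpa using lt_one_le_T h hxy
  | succ k ih =>
      have hx' : vK (x ^ p ^ k) ≤ 1 := by rw [Valuation.map_pow]; exact pow_le_one' hx _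
      have hy' : vK (y ^ p ^ k) ≤ 1 := by rw [Valuation.map_pow]; exact pow_le_one' hy _
      have key : vK ((x ^ p ^ k) ^ p - (y ^ p ^ k) ^ p) ≤
          vK (x ^ p ^ k - y ^ p ^ k) * max (vK (x ^ p ^ k - y ^ p ^ k)) (vK (p : K)) :=
        val_pow_sub_pow_strong _ hx' hy' p
      rw [← pow_mul, ← pow_mul, ← pow_succ] at key
      refine le_trans key ?_
      have hmax : max (vK (x ^ p ^ k - y ^ p ^ k)) (vK (p : K)) ≤ expQ (1 / (e : ℚ)) :=
        max_le (le_trans ih (pow_le_of_le_one zero_le' (T_le_one h) (Nat.succ_ne_zero k)))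
          (val_p_le_T h)
      calc vK (x ^ p ^ k - y ^ p ^ k) * max (vK (x ^ p ^ k - y ^ p ^ k)) (vK (p : K))
          ≤ expQ (1 / (e : ℚ)) ^ (k + 1) * expQ (1 / (e : ℚ)) := mul_le_mul' ih hmax
        _ = expQ (1 / (e : ℚ)) ^ (k + 2) := by rw [← pow_succ]

end Main
section Teich

variable {K : Type*} [Field K] [Valued K QM0] {p e : ℕ}

local notation "vK" => (Valued.v : Valuation K QM0)

lemma teich_zero (h : IsCompleteDVF K p e) : (0 : K) ∈ Teich K p :=
  ⟨by simp, fun s => ⟨0, by simp, zero_pow (pow_pos h.prime.pos s).ne'⟩⟩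

lemma teich_one : (1 : K) ∈ Teich K p :=
  ⟨by simp, fun s => ⟨1, by simp, one_pow _⟩⟩

lemma teich_mul {a b : K} (ha : a ∈ Teich K p) (hb : b ∈ Teich K p) :
    a * b ∈ Teich K p := by
  refine ⟨by rw [Valuation.map_mul]; exact mul_le_one' ha.1 hb.1, fun s => ?_⟩
  obtain ⟨x, hx1, hx2⟩ := ha.2 s
  obtain ⟨y, hy1, hy2⟩ := hb.2 s
  exact ⟨x * y, by rw [Valuation.map_mul]; exact mul_le_one' hx1 hy1,
    by rw [mul_pow, hx2, hy2]⟩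

variable (h : IsCompleteDVF K p e)
include h

lemma frob_iter_inj {x y : K} (hx : vK x ≤ 1) (hy : vK y ≤ 1) (s : ℕ)
    (hxy : vK (x ^ p ^ s - y ^ p ^ s) < 1) : vK (x - y) < 1 := by
  induction s with
  | zero => simpa using hxy
  | succ s ih =>
      apply ih
      apply frob_inj_val vK h.prime
        (by rw [Valuation.map_pow]; exact pow_le_one' hx _)
        (by rw [Valuation.map_pow]; exact pow_le_one' hy _) _ (val_p_lt_one h)
      rw [← pow_mul, ← pow_mul, ← pow_succ]
      exact hxy

lemma exists_int_val {z : K} (hz0 : z ≠ 0) (hz : vK z < 1) :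
    ∃ k : ℤ, 1 ≤ k ∧ vK z = expQ ((k : ℚ) / e) := by
  obtain ⟨k, hk⟩ := h.discrete z hz0
  refine ⟨k, ?_, hk⟩
  rw [hk, ← expQ_zero, expQ_lt_expQ] at hz
  by_contra hc
  push_neg at hc
  have : (k:ℚ) ≤ 0 := by exact_mod_cast Int.lt_add_one_iff.mp (by exact_mod_cast hc)
  have he : (0:ℚ) < e := by exact_mod_cast h.epos
  have : (k:ℚ) / e ≤ 0 := div_nonpos_of_nonpos_of_nonneg this he.le
  linarith

lemma teich_unique {a b : K} (ha : a ∈ Teich K p) (hb : b ∈ Teich K p)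
    (hab : vK (a - b) < 1) : a = b := by
  by_contra hne
  have hz0 : a - b ≠ 0 := sub_ne_zero_of_ne hne
  obtain ⟨k, hk1, hk⟩ := exists_int_val h hz0 hab
  set s := k.toNat with hs
  obtain ⟨x, hx1, hx2⟩ := ha.2 s
  obtain ⟨y, hy1, hy2⟩ := hb.2 s
  have hxy : vK (x - y) < 1 := by
    apply frob_iter_inj h hx1 hy1 s
    rw [hx2, hy2]; exact hab
  have hbound := iter_bound h h.prime hx1 hy1 hxy s
  rw [hx2, hy2, hk, expQ_pow] at hbound
  rw [expQ_le_expQ] at hbound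
  have he : (0:ℚ) < e := by exact_mod_cast h.epos
  rw [mul_one_div] at hbound
  have he : (0:ℚ) < e := by exact_mod_cast h.epos
  have h3 : ((s:ℚ) + 1) ≤ (k:ℚ) := by
    have := (div_le_div_iff_of_pos_right he).mp hbound
    push_cast at this ⊢
    linarith
  have hks : (k:ℚ) = (s:ℚ) := by
    have : (s:ℤ) = k := Int.toNat_of_nonneg (by linarith)
    exact_mod_cast this.symm
  linarith

end Teich
section Cauchy

variable {K : Type*} [Field K] [Valued K QM0] {p e : ℕ}

local notation "vK" => (Valued.v : Valuation K QM0)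

variable (h : IsCompleteDVF K p e)
include h

lemma exists_pow_lt' (γ : QM0) (hγ : γ ≠ 0) : ∃ N : ℕ, expQ (1/(e:ℚ)) ^ (N+1) < γ := by
  obtain ⟨m, rfl⟩ := WithZero.ne_zero_iff_exists.mp hγ
  have : (m : QM0) = expQ (-(Multiplicative.toAdd m)) := by
    simp [expQ]
  rw [this]
  have he : (0:ℚ) < e := by exact_mod_cast h.epos
  obtain ⟨N, hN⟩ := exists_nat_gt ((-(Multiplicative.toAdd m)) * e)
  refine ⟨N, ?_⟩
  rw [expQ_pow, expQ_lt_expQ, mul_one_div, lt_div_iff₀ he]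
  calc (-(Multiplicative.toAdd m)) * e < N := hN
  _ ≤ ((N:ℕ)+1 : ℕ) := by push_cast; linarith

omit h in
lemma telescope_bound {u : ℕ → K} {T : QM0} (hT : T ≤ 1)
    (hu : ∀ n, vK (u (n+1) - u n) ≤ T ^ (n+1)) :
    ∀ N n, N ≤ n → vK (u n - u N) ≤ T ^ (N+1) := by
  intro N n hNn
  induction n with
  | zero =>
      obtain rfl : N = 0 := Nat.le_zero.mp hNn
      simp
  | succ n ih =>
      rcases Nat.lt_or_ge N (n+1) with hlt | hge
      · have hNn' : N ≤ n := Nat.lt_succ_iff.mp hlt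
        have key : u (n+1) - u N = (u (n+1) - u n) + (u n - u N) := by ring
        rw [key]
        refine le_trans (Valuation.map_add _ _ _) (max_le ?_ (ih hNn'))
        exact le_trans (hu n) (pow_le_pow_right_of_le_one' hT (by omega))
      · obtain rfl : N = n + 1 := le_antisymm hNn hge
        simp

lemma cauchySeq_of_bound {u : ℕ → K}
    (hu : ∀ n, vK (u (n+1) - u n) ≤ expQ (1/(e:ℚ)) ^ (n+1)) : CauchySeq u := by
  rw [CauchySeq, Valued.cauchy_iff]
  refine ⟨map_neBot, fun γ => ?_⟩
  obtain ⟨N, hN⟩ := exists_pow_lt' h (MonoidWithZeroHom.ValueGroup₀.embedding γ.1)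
    ((map_ne_zero_iff _ MonoidWithZeroHom.ValueGroup₀.embedding_injective).mpr γ.ne_zero)
  refine ⟨{y | vK (y - u N) < MonoidWithZeroHom.ValueGroup₀.embedding γ.1}, ?_, ?_⟩
  · rw [Filter.mem_map]
    filter_upwards [Filter.eventually_ge_atTop N] with n hn
    exact lt_of_le_of_lt (telescope_bound (T_le_one h) hu N n hn) hN
  · intro a ha b hb
    rw [Valuation.restrict_lt_iff_lt_embedding]
    have : b - a = (b - u N) - (a - u N) := by ring
    rw [this]
    exact lt_of_le_of_lt (Valuation.map_sub _ _ _) (max_lt hb ha)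

omit h in
lemma val_tendsto_le {u : ℕ → K} {x : K} {c : QM0} (hx : Tendsto u atTop (nhds x))
    (hc : ∀ n, vK (u n) ≤ c) : vK x ≤ c := by
  by_contra hlt
  push_neg at hlt
  have hx0 : vK x ≠ 0 := by
    intro hz
    rw [hz] at hlt
    exact not_lt.mpr zero_le' hlt
  have : {y : K | vK (y - x) < Units.mk0 _ hx0} ∈ nhds x := by
    rw [Valued.mem_nhds]
    refine ⟨Units.mk0 ((Valued.v : Valuation K QM0).restrict x) (by simpa using hx0), fun y hy => ?_⟩
    simp only [Set.mem_setOf_eq, Units.val_mk0] at hy ⊢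
    exact (Valued.v : Valuation K QM0).restrict_lt_iff.mp hy
  obtain ⟨n, hn⟩ := (hx.eventually_mem this).exists
  have : vK (u n) = vK x := by
    have : u n = (u n - x) + x := by ring
    rw [this]
    exact Valuation.map_add_eq_of_lt_right _ hn
  exact absurd (this ▸ hc n) (not_le.mpr hlt)

end Cauchy

section Cauchy2

variable {K : Type*} [Field K] [Valued K QM0]

local notation "vK" => (Valued.v : Valuation K QM0)

lemma val_sub_limit_le {u : ℕ → K} {x w : K} {c : QM0} (hc0 : c ≠ 0)
    (hx : Tendsto u atTop (nhds x)) (hc : ∀ n, vK (u n - w) ≤ c) : vK (x - w) ≤ c := by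
  exact val_tendsto_le (hx.sub_const w) hc

end Cauchy2
section Surj

variable {K : Type*} [Field K] [Valued K QM0] {p e : ℕ}

local notation "vK" => (Valued.v : Valuation K QM0)

variable (h : IsCompleteDVF K p e)
include h

lemma teich_exists {x : K} (hx : vK x ≤ 1) :
    ∃ a ∈ Teich K p, vK (x - a) < 1 := by
  classical
  haveI := h.complete
  set T : QM0 := expQ (1/(e:ℚ)) with hTdef
  -- the p-th root step
  have step : ∀ y : {y : K // vK y ≤ 1}, ∃ w : {y : K // vK y ≤ 1}, vK (y.1 - w.1 ^ p) < 1 := by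
    intro y
    obtain ⟨w, hw1, hw2⟩ := h.perfectResidue y.1 y.2
    exact ⟨⟨w, hw1⟩, hw2⟩
  choose f hf using step
  set z : ℕ → {y : K // vK y ≤ 1} := fun s => f^[s] ⟨x, hx⟩ with hzdef
  have hz : ∀ s, z (s+1) = f (z s) := fun s => Function.iterate_succ_apply' f s _
  have hzd : ∀ s, vK ((z s).1 - ((z (s+1)).1) ^ p) < 1 := by
    intro s; rw [hz s]; exact hf (z s)
  set A : ℕ → ℕ → K := fun s k => (z (s+k)).1 ^ p ^ k with hAdef
  have hA1 : ∀ s k, vK (A s k) ≤ 1 := by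
    intro s k
    rw [Valuation.map_pow]
    exact pow_le_one' (z (s+k)).2 _
  have hAdiff : ∀ s k, vK (A s (k+1) - A s k) ≤ T ^ (k+1) := by
    intro s k
    have e1 : A s (k+1) = ((z (s+k+1)).1 ^ p) ^ p ^ k := by
      simp only [hAdef]
      rw [← Nat.add_assoc, ← pow_mul, ← pow_succ']
    have e2 : A s k = (z (s+k)).1 ^ p ^ k := rfl
    rw [e1, e2]
    apply iter_bound h h.prime
    · rw [Valuation.map_pow]; exact pow_le_one' (z (s+k+1)).2 _
    · exact (z (s+k)).2
    · rw [← Valuation.map_neg, neg_sub]; exact hzd (s+k)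
  have hcauchy : ∀ s, CauchySeq (A s) := fun s => cauchySeq_of_bound h (hAdiff s)
  choose b hb using fun s => cauchySeq_tendsto_of_complete (hcauchy s)
  have hbv : ∀ s, vK (b s) ≤ 1 := fun s => val_tendsto_le (hb s) (hA1 s)
  have hpow : ∀ s, (b s) ^ p ^ s = b 0 := by
    intro s
    have h1 : Tendsto (fun k => (A s k) ^ p ^ s) atTop (nhds ((b s) ^ p ^ s)) :=
      (hb s).pow _
    have h2 : (fun k => (A s k) ^ p ^ s) = fun k => A 0 (k + s) := by
      funext k
      simp only [hAdef]
      simp only [← pow_mul, ← pow_add, Nat.zero_add]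
      rw [Nat.add_comm s k]
    have h3 : Tendsto (fun k => A 0 (k + s)) atTop (nhds (b 0)) :=
      (hb 0).comp (tendsto_add_atTop_nat s)
    rw [h2] at h1
    exact tendsto_nhds_unique h1 h3
  refine ⟨b 0, ⟨hbv 0, fun s => ⟨b s, hbv s, hpow s⟩⟩, ?_⟩
  have hA00 : A 0 0 = x := by
    simp only [hAdef, hzdef]
    simp
  have hbnd : ∀ k, vK (A 0 k - x) ≤ T := by
    intro k
    have := telescope_bound (T_le_one h) (hAdiff 0) 0 k (Nat.zero_le k)
    rwa [hA00, pow_one] at this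
  have : vK (b 0 - x) ≤ T := val_sub_limit_le (expQ_ne_zero _) (hb 0) hbnd
  rw [← Valuation.map_neg, neg_sub]
  exact lt_of_le_of_lt this (T_lt_one h)

end Surj
section Residue

variable {K : Type*} [Field K] [Valued K QM0] {p e : ℕ}

local notation "vK" => (Valued.v : Valuation K QM0)
local notation "RK" => Valuation.valuationSubring (Valued.v : Valuation K QM0)

omit [Valued K QM0] in
lemma hrel_refl {Γ₀ : Type*} [LinearOrderedCommGroupWithZero Γ₀] (v : Valuation K Γ₀)
    (a : K) : hrel v 1 a a :=
  ⟨1, by simp, (mul_one a).symm⟩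

lemma val_of_hrel_unit {u : K} (hu : vK (u - 1) < 1) : vK u = 1 := by
  have : u = 1 + (u - 1) := by ring
  rw [this]
  exact Valuation.map_one_add_of_lt _ hu

lemma valsub_isUnit_iff (x : ↥RK) : IsUnit x ↔ vK x.1 = 1 := by
  constructor
  · rintro ⟨u, rfl⟩
    have h2 : vK ((u : ↥RK) : K) * vK (((u⁻¹ : (↥RK)ˣ) : ↥RK) : K) = 1 := by
      rw [← Valuation.map_mul]
      have h0 : ((u : ↥RK) : K) * (((u⁻¹ : (↥RK)ˣ) : ↥RK) : K) =
          (((u * u⁻¹ : (↥RK)ˣ) : ↥RK) : K) := rfl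
      rw [h0, mul_inv_cancel]
      simp
    have hu1 : vK ((u : ↥RK) : K) ≤ 1 := (u : ↥RK).2
    have hu2 : vK (((u⁻¹ : (↥RK)ˣ) : ↥RK) : K) ≤ 1 := ((u⁻¹ : (↥RK)ˣ) : ↥RK).2
    refine le_antisymm hu1 ?_
    calc (1:QM0) = vK ((u : ↥RK) : K) * vK (((u⁻¹ : (↥RK)ˣ) : ↥RK) : K) := h2.symm
      _ ≤ vK ((u : ↥RK) : K) * 1 := mul_le_mul' le_rfl hu2
      _ = vK ((u : ↥RK) : K) := mul_one _
  · intro hx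
    have hx0 : x.1 ≠ 0 := by
      intro hz
      rw [hz, Valuation.map_zero] at hx
      exact zero_ne_one hx
    have hinv : vK x.1⁻¹ ≤ 1 := by
      rw [Valuation.map_inv, hx]; norm_num
    refine IsUnit.of_mul_eq_one ⟨x.1⁻¹, hinv⟩ ?_
    ext
    exact mul_inv_cancel₀ hx0

lemma residue_eq_iff (x y : ↥RK) :
    IsLocalRing.residue RK x = IsLocalRing.residue RK y ↔ vK (x.1 - y.1) < 1 := by
  rw [← sub_eq_zero, ← map_sub, IsLocalRing.residue_eq_zero_iff,
    IsLocalRing.mem_maximalIdeal, mem_nonunits_iff, valsub_isUnit_iff]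
  have hle : vK ((x - y).1) ≤ 1 := (x - y).2
  have : (x - y).1 = x.1 - y.1 := rfl
  rw [this] at hle ⊢
  exact ⟨fun hne => lt_of_le_of_ne hle hne, fun hlt => ne_of_lt hlt⟩

lemma teich_val_eq_one (h : IsCompleteDVF K p e) {a : K} (ha : a ∈ Teich K p) (h0 : a ≠ 0) :
    vK a = 1 := by
  rcases lt_or_eq_of_le ha.1 with hlt | heq
  · exfalso
    obtain ⟨k, hk1, hk⟩ := exists_int_val h h0 hlt
    set s := k.toNat with hs
    obtain ⟨b, hb1, hb2⟩ := ha.2 s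
    have hb0 : b ≠ 0 := by
      intro hz; rw [hz, zero_pow (pow_pos h.prime.pos s).ne'] at hb2; exact h0 hb2.symm
    have hblt : vK b < 1 := by
      rcases lt_or_eq_of_le hb1 with hlt' | heq'
      · exact hlt'
      · exfalso
        have : vK a = 1 := by
          rw [← hb2, Valuation.map_pow, heq', one_pow]
        rw [this] at hlt
        exact lt_irrefl _ hlt
    obtain ⟨m, hm1, hm⟩ := exists_int_val h hb0 hblt
    have hva : vK a = expQ ((p ^ s : ℕ) * ((m:ℚ) / e)) := by
      rw [← hb2, Valuation.map_pow, hm, expQ_pow]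
    rw [hk] at hva
    have he : (0:ℚ) < e := by exact_mod_cast h.epos
    have heq2 : (k:ℚ) = (p ^ s : ℕ) * m := by
      have h4 := expQ_inj.mp hva
      have h5 := congrArg (fun t => t * (e:ℚ)) h4
      simp only [mul_assoc, div_mul_cancel₀ _ (ne_of_gt he)] at h5
      exact h5
    have hks : (k:ℚ) = (s:ℚ) := by
      have : (s:ℤ) = k := Int.toNat_of_nonneg (by linarith)
      exact_mod_cast this.symm
    have hps : (s:ℚ) < (p:ℚ) ^ s := by exact_mod_cast (Nat.lt_pow_self h.prime.one_lt : s < p ^ s)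
    have hm1' : (1:ℚ) ≤ (m:ℚ) := by exact_mod_cast hm1
    have hp2 : (1:ℚ) ≤ (p:ℚ) ^ s := one_le_pow₀ (by exact_mod_cast h.prime.one_lt.le)
    push_cast at heq2
    nlinarith
  · exact heq

end Residue
section Final

variable {K : Type*} [Field K] [Valued K QM0] {p e : ℕ}

local notation "vK" => (Valued.v : Valuation K QM0)

lemma hsum_val_lt {a b c : K} (ha : vK a ≤ 1) (hb : vK b ≤ 1)
    (hs : hsumMem vK 1 a b c) : vK (c - (a + b)) < 1 := by
  obtain ⟨x, y, ⟨u1, hu1, hx⟩, ⟨u2, hu2, hy⟩, ⟨u3, hu3, hc⟩⟩ := hs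
  subst hx hy hc
  have key : (a * u1 + b * u2) * u3 - (a + b) =
      (a * u1 + b * u2) * (u3 - 1) + (a * (u1 - 1) + b * (u2 - 1)) := by ring
  rw [key]
  have hvu1 : vK u1 = 1 := val_of_hrel_unit hu1
  have hvu2 : vK u2 = 1 := val_of_hrel_unit hu2
  have hxy : vK (a * u1 + b * u2) ≤ 1 := by
    refine le_trans (Valuation.map_add _ _ _) (max_le ?_ ?_) <;>
      rw [Valuation.map_mul]
    · rw [hvu1, mul_one]; exact ha
    · rw [hvu2, mul_one]; exact hb
  have bnd : ∀ w z : K, vK w ≤ 1 → vK (z - 1) < 1 → vK (w * (z - 1)) < 1 := by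
    intro w z hw hz
    rw [Valuation.map_mul]
    calc vK w * vK (z - 1) ≤ 1 * vK (z - 1) := mul_le_mul' hw le_rfl
      _ = vK (z - 1) := one_mul _
      _ < 1 := hz
  refine lt_of_le_of_lt (Valuation.map_add _ _ _) (max_lt (bnd _ _ hxy hu3) ?_)
  exact lt_of_le_of_lt (Valuation.map_add _ _ _)
    (max_lt (bnd _ _ ha hu1) (bnd _ _ hb hu2))

lemma teich_hsum_exists_unique (h : IsCompleteDVF K p e) {a b : K}
    (ha : a ∈ Teich K p) (hb : b ∈ Teich K p) :
    ∃! c : K, c ∈ Teich K p ∧ hsumMem vK 1 a b c := by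
  have hab : vK (a + b) ≤ 1 := le_trans (Valuation.map_add _ _ _) (max_le ha.1 hb.1)
  -- produce c ∈ Teich with `hsumMem` and `vK (c - (a+b)) < 1`
  have main : ∃ c : K, (c ∈ Teich K p ∧ hsumMem vK 1 a b c) ∧ vK (c - (a + b)) < 1 := by
    rcases lt_or_eq_of_le hab with hlt | heq
    · -- c = 0
      refine ⟨0, ⟨teich_zero h, ?_⟩, by rwa [zero_sub, Valuation.map_neg]⟩
      rcases eq_or_ne a 0 with rfl | ha0
      · have hb0 : b = 0 := by
          by_contra hb0
          rw [zero_add, teich_val_eq_one h hb hb0] at hlt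
          exact lt_irrefl _ hlt
        subst hb0
        exact ⟨0, 0, hrel_refl _ _, hrel_refl _ _, ⟨1, by simp, by ring⟩⟩
      · have hb0 : b ≠ 0 := by
          rintro rfl
          rw [add_zero, teich_val_eq_one h ha ha0] at hlt
          exact lt_irrefl _ hlt
        have hvb : vK b = 1 := teich_val_eq_one h hb hb0
        refine ⟨a, -a, hrel_refl _ _, ⟨-a / b, ?_, by field_simp⟩, ⟨1, by simp, by ring⟩⟩
        have key : -a / b - 1 = -((a + b) / b) := by field_simp; ring
        rw [key, Valuation.map_neg, Valuation.map_div, hvb, div_one]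
        exact hlt
    · -- vK (a+b) = 1
      obtain ⟨c, hct, hcv⟩ := teich_exists h hab
      have hab0 : a + b ≠ 0 := by
        intro hz
        rw [hz, Valuation.map_zero] at heq
        exact zero_ne_one heq
      refine ⟨c, ⟨hct, a, b, hrel_refl _ _, hrel_refl _ _, ⟨c / (a + b), ?_, by field_simp⟩⟩,
        by rwa [← Valuation.map_neg, neg_sub]⟩
      have key : c / (a + b) - 1 = (c - (a + b)) / (a + b) := by field_simp
      rw [key, Valuation.map_div, heq, div_one, ← Valuation.map_neg, neg_sub]
      exact hcv
  obtain ⟨c, hc, hcv⟩ := main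
  refine ⟨c, hc, fun c' hc' => ?_⟩
  apply teich_unique h hc'.1 hc.1
  have hcv' : vK (c' - (a + b)) < 1 := hsum_val_lt ha.1 hb.1 hc'.2
  have key : c' - c = (c' - (a + b)) - (c - (a + b)) := by ring
  rw [key]
  exact lt_of_le_of_lt (Valuation.map_sub _ _ _) (max_lt hcv' hcv)

end Final
/-- Let `K` be a complete discrete valued field of mixed characteristic
`(0,p)` with perfect residue field `k`, and `S(K)` its set of Teichmüller representatives.
Then: for all `a, b ∈ S(K)` there is a unique `c ∈ S(K)` with `[c]₁ ∈ [a]₁ + [b]₁` in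
`H₁(K)`; `S(K)` is closed under multiplication; and the map `[a]₁ ↦ a + 𝔪` is a field
isomorphism from `H₁(S(K))` onto the residue field `k` (it is bijective, multiplicative,
and carries the hyperfield addition of `H₁(K)` to the addition of `k`). -/
theorem statement4 (K : Type*) [Field K] [Valued K QM0] (p e : ℕ)
    (h : IsCompleteDVF K p e) :
    (∀ a ∈ Teich K p, ∀ b ∈ Teich K p,
      ∃! c : K, c ∈ Teich K p ∧ hsumMem (Valued.v : Valuation K QM0) 1 a b c) ∧
    (∀ a ∈ Teich K p, ∀ b ∈ Teich K p, a * b ∈ Teich K p) ∧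
    Function.Bijective (fun a : Teich K p =>
      IsLocalRing.residue (Valued.v : Valuation K QM0).valuationSubring
        ⟨a.1, (Valuation.mem_valuationSubring_iff _ _).mpr a.2.1⟩) ∧
    (∀ a b : Teich K p,
      IsLocalRing.residue (Valued.v : Valuation K QM0).valuationSubring
          ⟨a.1 * b.1, (Valuation.mem_valuationSubring_iff _ _).mpr
            (by rw [map_mul]; exact mul_le_one' a.2.1 b.2.1)⟩ =
        IsLocalRing.residue _ ⟨a.1, (Valuation.mem_valuationSubring_iff _ _).mpr a.2.1⟩ *
          IsLocalRing.residue _ ⟨b.1, (Valuation.mem_valuationSubring_iff _ _).mpr b.2.1⟩) ∧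
    (∀ a b c : Teich K p, hsumMem (Valued.v : Valuation K QM0) 1 a.1 b.1 c.1 →
      IsLocalRing.residue (Valued.v : Valuation K QM0).valuationSubring
          ⟨c.1, (Valuation.mem_valuationSubring_iff _ _).mpr c.2.1⟩ =
        IsLocalRing.residue _ ⟨a.1, (Valuation.mem_valuationSubring_iff _ _).mpr a.2.1⟩ +
          IsLocalRing.residue _ ⟨b.1, (Valuation.mem_valuationSubring_iff _ _).mpr b.2.1⟩) := by
  refine ⟨fun a ha b hb => teich_hsum_exists_unique h ha hb,
    fun a ha b hb => teich_mul ha hb, ⟨?inj, ?surj⟩, ?mul, ?add⟩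
  case inj =>
    intro a b hab
    simp only at hab
    apply Subtype.ext
    exact teich_unique h a.2 b.2 ((residue_eq_iff _ _).mp hab)
  case surj =>
    intro r
    obtain ⟨x, hx⟩ := IsLocalRing.residue_surjective (R := (Valued.v : Valuation K QM0).valuationSubring) r
    obtain ⟨t, ht, htx⟩ := teich_exists h ((Valuation.mem_valuationSubring_iff _ _).mp x.2)
    refine ⟨⟨t, ht⟩, ?_⟩
    simp only
    rw [← hx]
    apply (residue_eq_iff _ _).mpr
    rw [← Valuation.map_neg, neg_sub]
    exact htx
  case mul =>
    intro a b
    exact map_mul (IsLocalRing.residue (Valued.v : Valuation K QM0).valuationSubring)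
      ⟨a.1, (Valuation.mem_valuationSubring_iff _ _).mpr a.2.1⟩
      ⟨b.1, (Valuation.mem_valuationSubring_iff _ _).mpr b.2.1⟩
  case add =>
    intro a b c hs
    have hv := hsum_val_lt a.2.1 b.2.1 hs
    have key := (residue_eq_iff
      (⟨c.1, (Valuation.mem_valuationSubring_iff _ _).mpr c.2.1⟩)
      (⟨a.1, (Valuation.mem_valuationSubring_iff _ _).mpr a.2.1⟩ +
       ⟨b.1, (Valuation.mem_valuationSubring_iff _ _).mpr b.2.1⟩)).mpr hv
    rw [map_add] at key
    exact key
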